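/- For a finite collection of rings {R_α}, the direct product ∏_α R_α is weakly strongly 2-nil-clean if and only if each R_α is weakly strongly 2-nil-clean and at most one R_α fails to be strongly 2-nil-clean. -/

import Mathlib

/-- A ring is weakly strongly 2-nil-clean if every element is `±e ± f + n` with
`e, f` idempotents and `n` nilpotent, all commuting with each other. -/
def IsWeaklyStrongly2NilClean (R : Type*) [Ring R] : Prop :=
  ∀ a : R, ∃ e f n : R, IsIdempotentElem e ∧ IsIdempotentElem f ∧ IsNilpotent n ∧
    Commute e f ∧ Commute e n ∧ Commute f n ∧
    (a = e + f + n ∨ a = e - f + n ∨ a = -e + f + n ∨ a = -e - f + n)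

/-- A ring is strongly 2-nil-clean if every element is `e + f + n` with
`e, f` idempotents and `n` nilpotent, all commuting with each other. -/
def IsStrongly2NilClean (R : Type*) [Ring R] : Prop :=
  ∀ a : R, ∃ e f n : R, IsIdempotentElem e ∧ IsIdempotentElem f ∧ IsNilpotent n ∧
    Commute e f ∧ Commute e n ∧ Commute f n ∧ a = e + f + n

namespace WSNCAux

def P2 {R : Type*} [Ring R] (a : R) : Prop :=
  ∃ e f n : R, IsIdempotentElem e ∧ IsIdempotentElem f ∧ IsNilpotent n ∧
    Commute e f ∧ Commute e n ∧ Commute f n ∧ a = e + f + n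

variable {R : Type*} [Ring R]

lemma s2nc_iff_P2 : IsStrongly2NilClean R ↔ ∀ a : R, P2 a := Iff.rfl

lemma P2.map {S : Type*} [Ring S] (φ : R →+* S) {a : R} (h : P2 a) : P2 (φ a) := by
  obtain ⟨e, f, n, he, hf, hn, hef, hen, hfn, rfl⟩ := h
  exact ⟨φ e, φ f, φ n, he.map φ, hf.map φ, hn.map φ, hef.map φ, hen.map φ, hfn.map φ,
    by rw [map_add, map_add]⟩

lemma wsnc_iff : IsWeaklyStrongly2NilClean R ↔ ∀ a : R, P2 a ∨ P2 (a + 1) ∨ P2 (a + 2) := by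
  constructor
  · intro h a
    obtain ⟨e, f, n, he, hf, hn, hef, hen, hfn, hcase⟩ := h a
    rcases hcase with h1 | h2 | h3 | h4
    · exact Or.inl ⟨e, f, n, he, hf, hn, hef, hen, hfn, h1⟩
    · refine Or.inr (Or.inl ⟨e, 1 - f, n, he, hf.one_sub, hn,
        (Commute.one_right e).sub_right hef, hen, (Commute.one_left n).sub_left hfn, ?_⟩)
      rw [h2]; abel
    · refine Or.inr (Or.inl ⟨1 - e, f, n, he.one_sub, hf, hn,
        (Commute.one_left f).sub_left hef, (Commute.one_left n).sub_left hen, hfn, ?_⟩)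
      rw [h3]; abel
    · refine Or.inr (Or.inr ⟨1 - e, 1 - f, n, he.one_sub, hf.one_sub, hn,
        ((Commute.one_right (1 - e)).sub_right ((Commute.one_left f).sub_left hef)),
        (Commute.one_left n).sub_left hen, (Commute.one_left n).sub_left hfn, ?_⟩)
      rw [h4, show (2:R) = 1 + 1 from one_add_one_eq_two.symm]; abel
  · intro h a
    rcases h a with h1 | h2 | h3
    · obtain ⟨e, f, n, he, hf, hn, hef, hen, hfn, heq⟩ := h1
      exact ⟨e, f, n, he, hf, hn, hef, hen, hfn, Or.inl heq⟩
    · obtain ⟨e, f, n, he, hf, hn, hef, hen, hfn, heq⟩ := h2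
      refine ⟨e, 1 - f, n, he, hf.one_sub, hn,
        (Commute.one_right e).sub_right hef, hen, (Commute.one_left n).sub_left hfn,
        Or.inr (Or.inl ?_)⟩
      have : e - (1 - f) + n = e + f + n - 1 := by abel
      rw [this, ← heq]; abel
    · obtain ⟨e, f, n, he, hf, hn, hef, hen, hfn, heq⟩ := h3
      refine ⟨1 - e, 1 - f, n, he.one_sub, hf.one_sub, hn,
        ((Commute.one_right (1 - e)).sub_right ((Commute.one_left f).sub_left hef)),
        (Commute.one_left n).sub_left hen, (Commute.one_left n).sub_left hfn,
        Or.inr (Or.inr (Or.inr ?_))⟩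
      rw [show (2:R) = 1 + 1 from one_add_one_eq_two.symm] at heq
      have : -(1 - e) - (1 - f) + n = e + f + n - (1 + 1) := by abel
      rw [this, ← heq]; abel

section Pi
variable {ι : Type*} [Fintype ι] {A : ι → Type*} [∀ i, Ring (A i)]

lemma pi_nilpotent {n : ∀ i, A i} (h : ∀ i, IsNilpotent (n i)) : IsNilpotent n := by
  classical
  choose k hk using h
  refine ⟨(Finset.univ.sup k) + 1, funext fun i => ?_⟩
  have hle : k i ≤ Finset.univ.sup k + 1 :=
    le_trans (Finset.le_sup (Finset.mem_univ i)) (Nat.le_succ _)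
  have : (n i) ^ (Finset.univ.sup k + 1) = 0 := pow_eq_zero_of_le hle (hk i)
  simpa using this

lemma P2.pi {x : ∀ i, A i} (h : ∀ i, P2 (x i)) : P2 x := by
  choose e f n he hf hn hef hen hfn heq using h
  exact ⟨e, f, n, funext fun i => he i, funext fun i => hf i, pi_nilpotent hn,
    funext fun i => hef i, funext fun i => hen i, funext fun i => hfn i, funext heq⟩

end Pi

lemma idem_split {A : Type*} [CommRing A] {p : A} (hp : p * p = p) (h : IsNilpotent (6 * p)) :
    ∃ p1 p2 : A, p = p1 + p2 ∧ p1 * p1 = p1 ∧ p2 * p2 = p2 ∧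
      IsNilpotent (2 * p1) ∧ IsNilpotent (3 * p2) ∧ (∃ r, p1 = r * p) ∧ (∃ s, p2 = s * p) := by
  obtain ⟨m0, hm0⟩ := h
  have h6m : (6 : A) ^ (m0 + 1) * p = 0 := by
    have h1 : (6 * p) ^ (m0 + 1) = 0 := by rw [pow_succ, hm0, zero_mul]
    rwa [mul_pow, IsIdempotentElem.pow_succ_eq m0 hp] at h1
  have hcop : IsCoprime ((2 : ℤ) ^ (m0 + 1)) ((3 : ℤ) ^ (m0 + 1)) := by
    apply IsCoprime.pow
    rw [Int.isCoprime_iff_gcd_eq_one]; decide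
  obtain ⟨x, y, hxy⟩ := hcop
  have hsum : ((y : A) * 3 ^ (m0 + 1)) + ((x : A) * 2 ^ (m0 + 1)) = 1 := by
    have h2 : ((x * 2 ^ (m0 + 1) + y * 3 ^ (m0 + 1) : ℤ) : A) = ((1 : ℤ) : A) := by rw [hxy]
    push_cast at h2
    linear_combination h2
  have h23 : (2 : A) ^ (m0 + 1) * (3 : A) ^ (m0 + 1) = (6 : A) ^ (m0 + 1) := by
    rw [← mul_pow]; norm_num
  have hcd : ((y : A) * 3 ^ (m0 + 1)) * ((x : A) * 2 ^ (m0 + 1)) * p = 0 := by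
    have : ((y : A) * 3 ^ (m0 + 1)) * ((x : A) * 2 ^ (m0 + 1)) * p
        = ((y : A) * (x : A)) * ((6 : A) ^ (m0 + 1) * p) := by
      rw [← h23]; ring
    rw [this, h6m, mul_zero]
  set c : A := (y : A) * 3 ^ (m0 + 1) with hc
  set d : A := (x : A) * 2 ^ (m0 + 1) with hd
  have hidem1 : (c * p) * (c * p) = c * p := by
    linear_combination (c * c) * hp + (c * p) * hsum - hcd
  have hidem2 : (d * p) * (d * p) = d * p := by
    have hsum' : d + c = 1 := by rw [add_comm]; exact hsum
    have hdc : d * c * p = 0 := by rw [mul_comm d c]; exact hcd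
    linear_combination (d * d) * hp + (d * p) * hsum' - hdc
  refine ⟨c * p, d * p, ?_, hidem1, hidem2, ?_, ?_, ⟨c, rfl⟩, ⟨d, rfl⟩⟩
  · rw [← add_mul, hsum, one_mul]
  · refine ⟨m0 + 1, ?_⟩
    rw [mul_pow, IsIdempotentElem.pow_succ_eq m0 hidem1]
    have key2 : (2 : A) ^ (m0 + 1) * (c * p) = (y : A) * ((6 : A) ^ (m0 + 1) * p) := by
      rw [hc, ← h23]; ring
    rw [key2, h6m, mul_zero]
  · refine ⟨m0 + 1, ?_⟩
    rw [mul_pow, IsIdempotentElem.pow_succ_eq m0 hidem2]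
    have key3 : (3 : A) ^ (m0 + 1) * (d * p) = (x : A) * ((6 : A) ^ (m0 + 1) * p) := by
      rw [hd, ← h23]; ring
    rw [key3, h6m, mul_zero]

lemma nilpotent_to_sub {C : Subring R} {x : C} (h : IsNilpotent ((x : R))) : IsNilpotent x := by
  obtain ⟨k, hk⟩ := h
  exact ⟨k, Subtype.ext (by rw [SubmonoidClass.coe_pow, ZeroMemClass.coe_zero]; exact hk)⟩

lemma cube_nil {b : R} (h : P2 b) : IsNilpotent (b * (b - 1) * (b - 1 - 1)) := by
  obtain ⟨g, w, n, hg, hw, hn, hgw, hgn, hwn, hb⟩ := h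
  have hcomm : ∀ x ∈ ({g, w, n} : Set R), ∀ y ∈ ({g, w, n} : Set R), x * y = y * x := by
    intro x hx y hy
    simp only [Set.mem_insert_iff, Set.mem_singleton_iff] at hx hy
    rcases hx with rfl | rfl | rfl <;> rcases hy with rfl | rfl | rfl <;>
      first
        | rfl
        | exact hgw | exact hgw.symm | exact hgn | exact hgn.symm | exact hwn | exact hwn.symm
  set C : Subring R := Subring.closure ({g, w, n} : Set R) with hC
  letI : CommRing C := Subring.closureCommRingOfComm hcomm
  have hgm : g ∈ C := Subring.subset_closure (by simp)
  have hwm : w ∈ C := Subring.subset_closure (by simp)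
  have hnm : n ∈ C := Subring.subset_closure (by simp)
  set gg : C := ⟨g, hgm⟩ with hggdef
  set ww : C := ⟨w, hwm⟩ with hwwdef
  set nx : C := ⟨n, hnm⟩ with hnxdef
  have hgg : gg * gg = gg := Subtype.ext hg
  have hww : ww * ww = ww := Subtype.ext hw
  have hnx : IsNilpotent nx := nilpotent_to_sub (by rw [hnxdef]; exact hn)
  have hid : (gg + ww + nx) * ((gg + ww + nx) - 1) * ((gg + ww + nx) - 1 - 1) =
      nx * (3 * (gg + ww) ^ 2 + 3 * (gg + ww) * nx + nx ^ 2 - 6 * (gg + ww) - 3 * nx + 2) := by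
    linear_combination (gg + 3 * ww - 2) * hgg + (ww + 3 * gg - 2) * hww
  have hnilC : IsNilpotent ((gg + ww + nx) * ((gg + ww + nx) - 1) * ((gg + ww + nx) - 1 - 1)) := by
    rw [hid]; exact (Commute.all _ _).isNilpotent_mul_right hnx
  have := hnilC.map C.subtype
  have hcoe : (C.subtype) ((gg + ww + nx) * ((gg + ww + nx) - 1) * ((gg + ww + nx) - 1 - 1)) =
      b * (b - 1) * (b - 1 - 1) := by
    have h1 : (C.subtype) (gg + ww + nx) = b := by rw [hb]; rfl
    rw [map_mul, map_mul, map_sub, map_sub, map_sub, map_one, h1]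
  rwa [hcoe] at this

lemma key_lemma {a : R} (h1 : P2 (a - 1)) (h2 : P2 (a + 1)) : P2 a := by
  have hb' : IsNilpotent ((a + 1) * ((a + 1) - 1) * ((a + 1) - 1 - 1)) := cube_nil h2
  obtain ⟨e, f, n, he, hf, hn, hef, hen, hfn, ha⟩ := h1
  have ha' : a = e + f + n + 1 := by
    have h0 : a = a - 1 + 1 := by abel
    rw [h0, ha]
  have hcomm : ∀ x ∈ ({e, f, n} : Set R), ∀ y ∈ ({e, f, n} : Set R), x * y = y * x := by
    intro x hx y hy
    simp only [Set.mem_insert_iff, Set.mem_singleton_iff] at hx hy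
    rcases hx with rfl | rfl | rfl <;> rcases hy with rfl | rfl | rfl <;>
      first
        | rfl
        | exact hef | exact hef.symm | exact hen | exact hen.symm | exact hfn | exact hfn.symm
  set C : Subring R := Subring.closure ({e, f, n} : Set R) with hC
  letI : CommRing C := Subring.closureCommRingOfComm hcomm
  have hem : e ∈ C := Subring.subset_closure (by simp)
  have hfm : f ∈ C := Subring.subset_closure (by simp)
  have hnm : n ∈ C := Subring.subset_closure (by simp)
  set ee : C := ⟨e, hem⟩ with heedef
  set ff : C := ⟨f, hfm⟩ with hffdef
  set nn : C := ⟨n, hnm⟩ with hnndef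
  have hee : ee * ee = ee := Subtype.ext he
  have hff : ff * ff = ff := Subtype.ext hf
  have hnn : IsNilpotent nn := nilpotent_to_sub (by rw [hnndef]; exact hn)
  set aa : C := ee + ff + nn + 1 with haadef
  have haac : (C.subtype) aa = a := by rw [ha']; rfl
  -- nilpotency of aa (aa-1) (aa+1) in C
  have hy : IsNilpotent (aa * (aa - 1) * (aa + 1)) := by
    apply nilpotent_to_sub
    have h1 : ((aa : C) : R) = a := haac
    have hcoe : ((aa * (aa - 1) * (aa + 1) : C) : R) = a * (a - 1) * (a + 1) := by
      push_cast [h1]; rfl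
    rw [hcoe]
    have hq : a * (a - 1) * (a + 1) = (a + 1) * ((a + 1) - 1) * ((a + 1) - 1 - 1) := by
      noncomm_ring
    rw [hq]; exact hb'
  -- the spectral element 6(e+f)+12ef is nilpotent
  have hw : IsNilpotent (6 * (ee + ff) + 12 * (ee * ff)) := by
    have hid : 6 * (ee + ff) + 12 * (ee * ff)
        = aa * (aa - 1) * (aa + 1)
          - nn * (3 * (ee + ff + 1) ^ 2 + 3 * (ee + ff + 1) * nn + nn ^ 2 - 1) := by
      rw [haadef]
      linear_combination (-(ee + 3 * ff + 4)) * hee + (-(ff + 3 * ee + 4)) * hff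
    rw [hid]
    exact (Commute.all _ _).isNilpotent_sub hy ((Commute.all _ _).isNilpotent_mul_right hnn)
  -- corner nilpotencies
  have h6u : IsNilpotent (6 * (ee * (1 - ff))) := by
    have hmu : (6 * (ee + ff) + 12 * (ee * ff)) * (ee * (1 - ff)) = 6 * (ee * (1 - ff)) := by
      linear_combination (6 + 6 * ff - 12 * ff ^ 2) * hee + (-18 * ee) * hff
    rw [← hmu]; exact (Commute.all _ _).isNilpotent_mul_right hw
  have h6v : IsNilpotent (6 * (ff * (1 - ee))) := by
    have hmv : (6 * (ee + ff) + 12 * (ee * ff)) * (ff * (1 - ee)) = 6 * (ff * (1 - ee)) := by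
      linear_combination (-18 * ff) * hee + (6 + 6 * ee - 12 * ee ^ 2) * hff
    rw [← hmv]; exact (Commute.all _ _).isNilpotent_mul_right hw
  have h6w : IsNilpotent (6 * (ee * ff)) := by
    have hmw : (6 * (ee + ff) + 12 * (ee * ff)) * (ee * ff) = 24 * (ee * ff) := by
      linear_combination (6 * ff + 12 * ff ^ 2) * hee + (18 * ee) * hff
    have h24 : IsNilpotent (24 * (ee * ff)) := by
      rw [← hmw]; exact (Commute.all _ _).isNilpotent_mul_right hw
    have hcube : IsNilpotent ((6 * (ee * ff)) ^ 3) := by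
      have hq : (6 * (ee * ff)) ^ 3 = (9 * (ee * ff) ^ 2) * (24 * (ee * ff)) := by ring
      rw [hq]; exact (Commute.all _ _).isNilpotent_mul_left h24
    obtain ⟨k, hk⟩ := hcube
    exact ⟨3 * k, by rw [pow_mul]; exact hk⟩
  -- idempotents
  have hu_idem : (ee * (1 - ff)) * (ee * (1 - ff)) = ee * (1 - ff) := by
    linear_combination (1 - 2 * ff + ff ^ 2) * hee + ee * hff
  have hv_idem : (ff * (1 - ee)) * (ff * (1 - ee)) = ff * (1 - ee) := by
    linear_combination ff * hee + (1 - 2 * ee + ee ^ 2) * hff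
  have hw_idem : (ee * ff) * (ee * ff) = ee * ff := by
    linear_combination ff ^ 2 * hee + ee * hff
  have hz_idem : ((1 - ee) * (1 - ff)) * ((1 - ee) * (1 - ff)) = (1 - ee) * (1 - ff) := by
    linear_combination ((1 - ff) ^ 2) * hee + (1 - ee) * hff
  -- orthogonality
  have huv : (ee * (1 - ff)) * (ff * (1 - ee)) = 0 := by
    linear_combination (ff ^ 2 - ff) * hee
  have huw : (ee * (1 - ff)) * (ee * ff) = 0 := by
    linear_combination (-(ee ^ 2)) * hff
  have huz : (ee * (1 - ff)) * ((1 - ee) * (1 - ff)) = 0 := by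
    linear_combination (-((1 - ff) ^ 2)) * hee
  have hvw : (ff * (1 - ee)) * (ee * ff) = 0 := by
    linear_combination (-(ff ^ 2)) * hee
  have hvz : (ff * (1 - ee)) * ((1 - ee) * (1 - ff)) = 0 := by
    linear_combination (-((1 - ee) ^ 2)) * hff
  have hwz : (ee * ff) * ((1 - ee) * (1 - ff)) = 0 := by
    linear_combination (ff ^ 2 - ff) * hee
  -- splittings
  obtain ⟨u1, u2, hu_sum, hu1i, hu2i, h2u1, h3u2, ⟨r1, hr1⟩, ⟨r2, hr2⟩⟩ := idem_split hu_idem h6u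
  obtain ⟨v1, v2, hv_sum, hv1i, hv2i, h2v1, h3v2, ⟨s1, hs1⟩, ⟨s2, hs2⟩⟩ := idem_split hv_idem h6v
  obtain ⟨w1, w2, hw_sum, hw1i, hw2i, h2w1, h3w2, ⟨t1, ht1⟩, ⟨t2, ht2⟩⟩ := idem_split hw_idem h6w
  -- cross-orthogonality
  have hu2v2 : u2 * v2 = 0 := by
    rw [hr2, hs2, show (r2 * (ee * (1 - ff))) * (s2 * (ff * (1 - ee)))
      = (r2 * s2) * ((ee * (1 - ff)) * (ff * (1 - ee))) from by ring, huv, mul_zero]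
  have hu2w1 : u2 * w1 = 0 := by
    rw [hr2, ht1, show (r2 * (ee * (1 - ff))) * (t1 * (ee * ff))
      = (r2 * t1) * ((ee * (1 - ff)) * (ee * ff)) from by ring, huw, mul_zero]
  have hu2z : u2 * ((1 - ee) * (1 - ff)) = 0 := by
    rw [hr2, show (r2 * (ee * (1 - ff))) * ((1 - ee) * (1 - ff))
      = r2 * ((ee * (1 - ff)) * ((1 - ee) * (1 - ff))) from by ring, huz, mul_zero]
  have hv2w1 : v2 * w1 = 0 := by
    rw [hs2, ht1, show (s2 * (ff * (1 - ee))) * (t1 * (ee * ff))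
      = (s2 * t1) * ((ff * (1 - ee)) * (ee * ff)) from by ring, hvw, mul_zero]
  have hv2z : v2 * ((1 - ee) * (1 - ff)) = 0 := by
    rw [hs2, show (s2 * (ff * (1 - ee))) * ((1 - ee) * (1 - ff))
      = s2 * ((ff * (1 - ee)) * ((1 - ee) * (1 - ff))) from by ring, hvz, mul_zero]
  have hw1z : w1 * ((1 - ee) * (1 - ff)) = 0 := by
    rw [ht1, show (t1 * (ee * ff)) * ((1 - ee) * (1 - ff))
      = t1 * ((ee * ff) * ((1 - ee) * (1 - ff))) from by ring, hwz, mul_zero]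
  -- assemble
  have hE : (u2 + v2) * (u2 + v2) = u2 + v2 := by
    linear_combination hu2i + hv2i + 2 * hu2v2
  have hF : (u2 + v2 + w1 + (1 - ee) * (1 - ff)) * (u2 + v2 + w1 + (1 - ee) * (1 - ff))
      = u2 + v2 + w1 + (1 - ee) * (1 - ff) := by
    linear_combination hu2i + hv2i + hw1i + hz_idem + 2 * hu2v2 + 2 * hu2w1 + 2 * hu2z
      + 2 * hv2w1 + 2 * hv2z + 2 * hw1z
  have hN : IsNilpotent (nn + 2 * u1 + 2 * v1 + 2 * w1 + 3 * w2) := by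
    refine (Commute.all _ _).isNilpotent_add ?_ h3w2
    refine (Commute.all _ _).isNilpotent_add ?_ h2w1
    refine (Commute.all _ _).isNilpotent_add ?_ h2v1
    exact (Commute.all _ _).isNilpotent_add hnn h2u1
  have heq : aa = (u2 + v2) + (u2 + v2 + w1 + (1 - ee) * (1 - ff))
      + (nn + 2 * u1 + 2 * v1 + 2 * w1 + 3 * w2) := by
    rw [haadef]
    linear_combination 2 * hu_sum + 2 * hv_sum + 3 * hw_sum
  refine ⟨((u2 + v2 : C) : R), ((u2 + v2 + w1 + (1 - ee) * (1 - ff) : C) : R),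
    ((nn + 2 * u1 + 2 * v1 + 2 * w1 + 3 * w2 : C) : R), ?_, ?_, ?_, ?_, ?_, ?_, ?_⟩
  · exact congrArg Subtype.val hE
  · exact congrArg Subtype.val hF
  · exact (hN.map C.subtype)
  · exact congrArg Subtype.val
      (mul_comm (u2 + v2) (u2 + v2 + w1 + (1 - ee) * (1 - ff)))
  · exact congrArg Subtype.val
      (mul_comm (u2 + v2) (nn + 2 * u1 + 2 * v1 + 2 * w1 + 3 * w2))
  · exact congrArg Subtype.val
      (mul_comm (u2 + v2 + w1 + (1 - ee) * (1 - ff)) (nn + 2 * u1 + 2 * v1 + 2 * w1 + 3 * w2))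
  · rw [ha']; exact congrArg Subtype.val heq

end WSNCAux

open WSNCAux in
theorem pi_wsnc_iff {ι : Type*} [Fintype ι] (R : ι → Type*) [∀ i, Ring (R i)] :
    IsWeaklyStrongly2NilClean (∀ i, R i) ↔
      (∀ i, IsWeaklyStrongly2NilClean (R i)) ∧
      (∀ i j, ¬ IsStrongly2NilClean (R i) → ¬ IsStrongly2NilClean (R j) → i = j) := by
  classical
  constructor
  · intro h
    have hP : ∀ x : (∀ i, R i), P2 x ∨ P2 (x + 1) ∨ P2 (x + 2) := wsnc_iff.mp h
    have proj : ∀ (y : ∀ k, R k) (i : ι), P2 y → P2 (y i) :=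
      fun y i hy => hy.map (Pi.evalRingHom R i)
    constructor
    · intro i
      rw [wsnc_iff]
      intro a
      set x : ∀ k, R k := Function.update (0 : ∀ k, R k) i a with hx
      have hxi : x i = a := Function.update_self i a 0
      rcases hP x with h1 | h2 | h3
      · exact Or.inl (by have := proj _ i h1; rwa [hxi] at this)
      · refine Or.inr (Or.inl ?_)
        have := proj _ i h2
        simpa [hxi] using this
      · refine Or.inr (Or.inr ?_)
        have := proj _ i h3
        simpa [hxi] using this
    · intro i j hi hj
      by_contra hne
      obtain ⟨a, ha⟩ : ∃ a : R i, ¬ P2 a := by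
        by_contra hall; push_neg at hall; exact hi (s2nc_iff_P2.mpr hall)
      obtain ⟨b, hb⟩ : ∃ b : R j, ¬ P2 b := by
        by_contra hall; push_neg at hall; exact hj (s2nc_iff_P2.mpr hall)
      obtain ⟨c, hc0, hc1⟩ : ∃ c : R i, ¬ P2 c ∧ ¬ P2 (c + 1) := by
        by_cases h1 : P2 (a + 1)
        · refine ⟨a - 1, fun hm => ha (key_lemma hm h1), ?_⟩
          simpa [sub_add_cancel] using ha
        · exact ⟨a, ha, h1⟩
      set x : ∀ k, R k :=
        Function.update (Function.update (0 : ∀ k, R k) i c) j (b - 2) with hx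
      have hxi : x i = c := by
        rw [hx, Function.update_of_ne hne, Function.update_self]
      have hxj : x j = b - 2 := by
        rw [hx, Function.update_self]
      rcases hP x with h1 | h2 | h3
      · exact hc0 (by have := proj _ i h1; rwa [hxi] at this)
      · refine hc1 ?_
        have := proj _ i h2
        simpa [hxi] using this
      · refine hb ?_
        have := proj _ j h3
        rw [Pi.add_apply, hxj] at this
        simpa [sub_add_cancel] using this
  · rintro ⟨hw, huniq⟩
    rw [wsnc_iff]
    intro x
    by_cases hall : ∀ i, IsStrongly2NilClean (R i)
    · exact Or.inl (P2.pi fun i => (s2nc_iff_P2.mp (hall i)) (x i))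
    · push_neg at hall
      obtain ⟨j, hj⟩ := hall
      have hgood : ∀ i, i ≠ j → ∀ a : R i, P2 a := by
        intro i hne
        have : IsStrongly2NilClean (R i) := by
          by_contra h'
          exact hne (huniq i j h' hj)
        exact s2nc_iff_P2.mp this
      rcases wsnc_iff.mp (hw j) (x j) with h1 | h2 | h3
      · refine Or.inl (P2.pi fun i => ?_)
        rcases eq_or_ne i j with rfl | hne
        · exact h1
        · exact hgood i hne _
      · refine Or.inr (Or.inl (P2.pi fun i => ?_))
        rcases eq_or_ne i j with rfl | hne
        · exact h2
        · exact hgood i hne _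
      · refine Or.inr (Or.inr (P2.pi fun i => ?_))
        rcases eq_or_ne i j with rfl | hne
        · exact h3
        · exact hgood i hne _
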